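/- Let Φ, Φ' : S¹ → U(n) be measurable unitary-valued functions with Φℋ₊ = Φ'ℋ₊ as subspaces of L²(S¹,ℂⁿ). Then there is a constant unitary matrix U ∈ U(n) with Φ'(λ) = Φ(λ)U for a.e. λ ∈ S¹. -/

import Mathlib

open MeasureTheory Complex
open scoped Matrix

noncomputable section

local instance : Fact (0 < 2 * Real.pi) := ⟨by positivity⟩

/-- The circle `S¹` parametrized as `ℝ/2πℤ`; the point `θ` corresponds to `λ = e^{iθ} ∈ S¹`. -/
abbrev Tc : Type := AddCircle (2 * Real.pi)

/-- `ℂⁿ` as a Hilbert space. -/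
abbrev Ecn (n : ℕ) : Type := EuclideanSpace ℂ (Fin n)

/-- The Hilbert space `L²(S¹, ℂⁿ)`. -/
abbrev H2 (n : ℕ) : Type := Lp (Ecn n) 2 (volume : Measure Tc)

/-- The Hardy space `ℋ₊ ⊂ L²(S¹,ℂⁿ)`: elements whose negative Fourier coefficients vanish. -/
def Hardy (n : ℕ) : Set (H2 n) :=
  {f | ∀ m : ℤ, m < 0 → fourierCoeff (f : Tc → Ecn n) m = 0}

/-- The subset `Φℋ₊` of `L²(S¹,ℂⁿ)`: the image of the Hardy space under pointwise
multiplication by the matrix-valued function `Φ`. -/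
def mulHardy {n : ℕ} (Φ : Tc → Matrix (Fin n) (Fin n) ℂ) : Set (H2 n) :=
  {g | ∃ f ∈ Hardy n, (g : Tc → Ecn n) =ᵐ[volume] fun θ =>
    (WithLp.equiv 2 (∀ _ : Fin n, ℂ)).symm
      ((Φ θ).mulVec (WithLp.equiv 2 (∀ _ : Fin n, ℂ) ((f : Tc → Ecn n) θ)))}

open AddCircle in
lemma my_ae_eq : (ae (volume : Measure Tc)) = ae (haarAddCircle : Measure Tc) := by
  rw [AddCircle.volume_eq_smul_haarAddCircle]
  refine Measure.ae_ennreal_smul_measure_eq (c := ENNReal.ofReal (2 * Real.pi)) ?_ _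
  simp only [ne_eq, ENNReal.ofReal_eq_zero, not_le]
  positivity

open AddCircle in
lemma my_integral_fourier (m : ℤ) :
    ∫ t : Tc, fourier m t ∂haarAddCircle = if m = 0 then 1 else 0 := by
  have h := orthonormal_iff_ite.mp (orthonormal_fourier (T := 2 * Real.pi)) 0 m
  rw [MeasureTheory.L2.inner_def] at h
  rw [show (if m = 0 then (1:ℂ) else 0) = if (0:ℤ) = m then 1 else 0 by
    simp [eq_comm], ← h]
  apply integral_congr_ae
  filter_upwards [coeFn_fourierLp (T := 2 * Real.pi) 2 0, coeFn_fourierLp (T := 2 * Real.pi) 2 m]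
    with t h0 hm
  rw [h0, hm, RCLike.inner_apply, fourier_zero, map_one, mul_one]

open AddCircle in
lemma my_fourierCoeff_const {E : Type} [NormedAddCommGroup E] [NormedSpace ℂ E]
    [CompleteSpace E] (v : E) (m : ℤ) :
    fourierCoeff (fun _ : Tc => v) m = if m = 0 then v else 0 := by
  rw [fourierCoeff, integral_smul_const, my_integral_fourier]
  simp only [neg_eq_zero]
  split <;> simp

open AddCircle in
open scoped ComplexConjugate in
lemma my_fourierCoeff_conj (f : Tc → ℂ) (m : ℤ) :
    fourierCoeff (fun t => conj (f t)) m = conj (fourierCoeff f (-m)) := by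
  rw [fourierCoeff, fourierCoeff, ← integral_conj]
  congr 1
  ext t
  rw [smul_eq_mul, smul_eq_mul, map_mul, ← fourier_neg, neg_neg]

open AddCircle in
lemma my_const_of_fourierCoeff (f : Tc → ℂ) (hf : MemLp f 2 haarAddCircle)
    (h : ∀ m : ℤ, m ≠ 0 → fourierCoeff f m = 0) :
    f =ᵐ[haarAddCircle] fun _ => fourierCoeff f 0 := by
  set c := fourierCoeff f 0 with hc
  have hFc : ∀ m : ℤ, fourierCoeff ((hf.toLp f : Lp ℂ 2 haarAddCircle) : Tc → ℂ) m
      = fourierCoeff f m := by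
    intro m
    apply integral_congr_ae
    filter_upwards [hf.coeFn_toLp] with t ht
    rw [ht]
  have key : hf.toLp f = c • fourierLp 2 0 := by
    apply fourierBasis.repr.injective
    ext m
    rw [fourierBasis_repr, hFc, _root_.map_smul]
    have : fourierBasis.repr (fourierLp (T := 2 * Real.pi) 2 0) = lp.single 2 0 1 := by
      rw [← coe_fourierBasis]
      exact fourierBasis.repr_self 0
    rw [this]
    rcases eq_or_ne m 0 with rfl | hm
    · simp [lp.single_apply, hc]
    · simp [lp.single_apply, hm, h m hm]
  have h1 : f =ᵐ[haarAddCircle] ((hf.toLp f : Lp ℂ 2 haarAddCircle) : Tc → ℂ) :=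
    hf.coeFn_toLp.symm
  refine h1.trans ?_
  rw [key]
  filter_upwards [Lp.coeFn_smul c (fourierLp (T := 2 * Real.pi) 2 0),
    coeFn_fourierLp (T := 2 * Real.pi) 2 0] with t h2 h3
  rw [h2, Pi.smul_apply, h3, fourier_zero, smul_eq_mul, mul_one]

open AddCircle in
lemma my_fourierCoeff_proj {n : ℕ} (f : Tc → Ecn n) (hf : Integrable f haarAddCircle)
    (i : Fin n) (m : ℤ) :
    fourierCoeff (fun θ => f θ i) m = fourierCoeff f m i := by
  have hint : Integrable (fun t : Tc => fourier (-m) t • f t) haarAddCircle := by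
    refine Integrable.smul_of_top_right (φ := fun t : Tc => fourier (-m) t) hf ?_
    refine MemLp.of_bound ?_ 1 ?_
    · exact (Continuous.aestronglyMeasurable (by continuity))
    · filter_upwards with t
      simp [Circle.norm_coe]
  have := (EuclideanSpace.proj (𝕜 := ℂ) i).integral_comp_comm hint
  rw [fourierCoeff, fourierCoeff]
  have h2 : (∫ t : Tc, fourier (-m) t • f t ∂haarAddCircle) i
      = EuclideanSpace.proj (𝕜 := ℂ) i (∫ t : Tc, fourier (-m) t • f t ∂haarAddCircle) := rfl
  rw [h2, ← this]
  apply integral_congr_ae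
  filter_upwards with t
  simp

lemma my_unitary_col_sum {n : ℕ} {U : Matrix (Fin n) (Fin n) ℂ}
    (hU : U ∈ Matrix.unitaryGroup (Fin n) ℂ) (j : Fin n) :
    ∑ k, ‖U k j‖ ^ 2 = 1 := by
  have h := Matrix.mem_unitaryGroup_iff'.mp hU
  have h2 := congrArg (fun M : Matrix (Fin n) (Fin n) ℂ => M j j) h
  simp only [Matrix.star_eq_conjTranspose, Matrix.mul_apply, Matrix.conjTranspose_apply,
    Matrix.one_apply_eq] at h2
  have h3 : ∑ k, (‖U k j‖ ^ 2 : ℂ) = 1 := by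
    rw [← h2]
    refine Finset.sum_congr rfl fun k _ => ?_
    rw [RCLike.star_def, mul_comm, Complex.mul_conj']
  exact_mod_cast h3

lemma my_unitary_entry_le {n : ℕ} {U : Matrix (Fin n) (Fin n) ℂ}
    (hU : U ∈ Matrix.unitaryGroup (Fin n) ℂ) (i j : Fin n) :
    ‖U i j‖ ≤ 1 := by
  have hs := my_unitary_col_sum hU j
  have h1 : ‖U i j‖ ^ 2 ≤ 1 := by
    rw [← hs]
    exact Finset.single_le_sum (f := fun k => ‖U k j‖ ^ 2) (fun k _ => sq_nonneg _)
      (Finset.mem_univ i)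
  nlinarith [norm_nonneg (U i j)]

lemma my_unitary_col_norm {n : ℕ} {U : Matrix (Fin n) (Fin n) ℂ}
    (hU : U ∈ Matrix.unitaryGroup (Fin n) ℂ) (j : Fin n) :
    ‖((WithLp.equiv 2 (∀ _ : Fin n, ℂ)).symm (U.mulVec (Pi.single j 1)) : Ecn n)‖ ≤ 1 := by
  rw [EuclideanSpace.norm_eq]
  have : ∀ k, ‖((WithLp.equiv 2 (∀ _ : Fin n, ℂ)).symm (U.mulVec (Pi.single j 1)) : Ecn n) k‖
      = ‖U k j‖ := by
    intro k
    show ‖U.mulVec (Pi.single j 1) k‖ = _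
    simp [Matrix.mulVec_single]
  simp_rw [this]
  rw [my_unitary_col_sum hU j, Real.sqrt_one]

open AddCircle in
lemma my_aux_cols {n : ℕ} (Φ Φ' : Tc → Matrix (Fin n) (Fin n) ℂ)
    (hmeas' : ∀ i j : Fin n, Measurable fun θ => Φ' θ i j)
    (hunit : ∀ᵐ θ ∂(volume : Measure Tc), Φ θ ∈ Matrix.unitaryGroup (Fin n) ℂ)
    (hunit' : ∀ᵐ θ ∂(volume : Measure Tc), Φ' θ ∈ Matrix.unitaryGroup (Fin n) ℂ)
    (hsub : mulHardy Φ' ⊆ mulHardy Φ) (i j : Fin n) (m : ℤ) (hm : m < 0) :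
    fourierCoeff (fun θ => ((Φ θ)ᴴ * Φ' θ) i j) m = 0 := by
  classical
  -- the constant function with value `e_j`
  set e : Ecn n := (WithLp.equiv 2 (∀ _ : Fin n, ℂ)).symm (Pi.single j 1) with he
  have hEmem : MemLp (fun _ : Tc => e) 2 (volume : Measure Tc) := memLp_const e
  set Ej : H2 n := hEmem.toLp _ with hEj
  have hEH : Ej ∈ Hardy n := by
    intro k hk
    have h1 : (Ej : Tc → Ecn n) =ᵐ[haarAddCircle] fun _ => e := my_ae_eq ▸ hEmem.coeFn_toLp
    have : fourierCoeff (Ej : Tc → Ecn n) k = fourierCoeff (fun _ : Tc => e) k :=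
      integral_congr_ae (by filter_upwards [h1] with t ht; rw [ht])
    rw [this, my_fourierCoeff_const, if_neg (by omega)]
  -- the function `θ ↦ Φ'(θ) e_j`
  set gfun : Tc → Ecn n := fun θ =>
    (WithLp.equiv 2 (∀ _ : Fin n, ℂ)).symm ((Φ' θ).mulVec (Pi.single j 1)) with hgfun
  have hgmeas : AEStronglyMeasurable gfun (volume : Measure Tc) := by
    have hm0 : Measurable fun θ => (Φ' θ).mulVec (Pi.single j 1) := by
      refine measurable_pi_lambda _ fun k => ?_
      have : (fun θ => (Φ' θ).mulVec (Pi.single j 1) k) = fun θ => Φ' θ k j * 1 := by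
        funext θ; simp [Matrix.mulVec_single]
      rw [this]
      exact (hmeas' k j).mul_const 1
    exact Continuous.comp_aestronglyMeasurable
      (PiLp.continuousLinearEquiv 2 ℂ (fun _ : Fin n => ℂ)).symm.continuous
      hm0.aestronglyMeasurable
  have hgbound : ∀ᵐ θ ∂(volume : Measure Tc), ‖gfun θ‖ ≤ 1 := by
    filter_upwards [hunit'] with θ hθ
    exact my_unitary_col_norm hθ j
  have hg2 : MemLp gfun 2 (volume : Measure Tc) := MemLp.of_bound hgmeas 1 hgbound
  set Gj : H2 n := hg2.toLp _ with hGj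
  have hGmem : Gj ∈ mulHardy Φ' := by
    refine ⟨Ej, hEH, ?_⟩
    filter_upwards [hg2.coeFn_toLp, hEmem.coeFn_toLp] with θ h1 h2
    rw [h1, h2, hgfun]
    simp only [he, Equiv.apply_symm_apply]
  obtain ⟨f, hfH, hfeq⟩ := hsub hGmem
  -- integrability of `f` w.r.t. the Haar measure
  have hfint : Integrable (f : Tc → Ecn n) haarAddCircle := by
    have h1 : MemLp (f : Tc → Ecn n) 2 haarAddCircle := by
      have h2 : (haarAddCircle : Measure Tc)
          = (ENNReal.ofReal (2 * Real.pi))⁻¹ • (volume : Measure Tc) := by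
        rw [AddCircle.volume_eq_smul_haarAddCircle, smul_smul,
          ENNReal.inv_mul_cancel (by
            simp only [ne_eq, ENNReal.ofReal_eq_zero, not_le]
            linarith [Real.pi_pos])
            ENNReal.ofReal_ne_top, one_smul]
      rw [h2]
      exact (Lp.memLp f).smul_measure (by simp [Real.pi_pos])
    exact h1.integrable one_le_two
  -- the key pointwise identity
  have hpt : ∀ᵐ θ ∂(volume : Measure Tc), ∀ k, ((Φ θ)ᴴ * Φ' θ) k j = (f : Tc → Ecn n) θ k := by
    filter_upwards [hg2.coeFn_toLp, hfeq, hunit] with θ h1 h2 hU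
    intro k
    have h3 : gfun θ = (WithLp.equiv 2 (∀ _ : Fin n, ℂ)).symm
        ((Φ θ).mulVec (WithLp.equiv 2 (∀ _ : Fin n, ℂ) ((f : Tc → Ecn n) θ))) := by
      rw [← h1, h2]
    have h4 : (Φ' θ).mulVec (Pi.single j 1)
        = (Φ θ).mulVec (WithLp.equiv 2 (∀ _ : Fin n, ℂ) ((f : Tc → Ecn n) θ)) := by
      have := congrArg (WithLp.equiv 2 (∀ _ : Fin n, ℂ)) h3
      simpa only [hgfun, Equiv.apply_symm_apply] using this
    have h5 : ((Φ θ)ᴴ * Φ' θ).mulVec (Pi.single j 1)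
        = WithLp.equiv 2 (∀ _ : Fin n, ℂ) ((f : Tc → Ecn n) θ) := by
      rw [← Matrix.mulVec_mulVec, h4, Matrix.mulVec_mulVec]
      have hstar : (Φ θ)ᴴ * Φ θ = 1 := by
        rw [← Matrix.star_eq_conjTranspose]
        exact Matrix.mem_unitaryGroup_iff'.mp hU
      rw [hstar, Matrix.one_mulVec]
    have h6 := congrFun h5 k
    simpa [Matrix.mulVec_single] using h6
  -- conclude by computing the Fourier coefficient
  have hpt' : ∀ᵐ θ ∂(haarAddCircle : Measure Tc),
      ((Φ θ)ᴴ * Φ' θ) i j = (f : Tc → Ecn n) θ i := by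
    refine (my_ae_eq ▸ hpt : ∀ᵐ θ ∂(haarAddCircle : Measure Tc), _).mono fun θ hθ => hθ i
  have hcoeff : fourierCoeff (fun θ => ((Φ θ)ᴴ * Φ' θ) i j) m
      = fourierCoeff (fun θ => (f : Tc → Ecn n) θ i) m :=
    integral_congr_ae (by filter_upwards [hpt'] with t ht; rw [ht])
  rw [hcoeff, my_fourierCoeff_proj _ hfint, hfH m hm]
  rfl

/- STATEMENT 10: Let Φ, Φ' : S¹ → U(n) be measurable unitary-valued functions with
Φℋ₊ = Φ'ℋ₊ as subspaces of L²(S¹,ℂⁿ). Then there is a constant unitary matrix U ∈ U(n)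
with Φ'(λ) = Φ(λ)U for a.e. λ ∈ S¹. -/

theorem beurling_lax_halmos_uniqueness
    (n : ℕ)
    (Φ Φ' : Tc → Matrix (Fin n) (Fin n) ℂ)
    (hmeas : ∀ i j : Fin n, Measurable fun θ => Φ θ i j)
    (hmeas' : ∀ i j : Fin n, Measurable fun θ => Φ' θ i j)
    (hunit : ∀ᵐ θ ∂(volume : Measure Tc), Φ θ ∈ Matrix.unitaryGroup (Fin n) ℂ)
    (hunit' : ∀ᵐ θ ∂(volume : Measure Tc), Φ' θ ∈ Matrix.unitaryGroup (Fin n) ℂ)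
    (heq : mulHardy Φ = mulHardy Φ') :
    ∃ U ∈ Matrix.unitaryGroup (Fin n) ℂ,
      ∀ᵐ θ ∂(volume : Measure Tc), Φ' θ = Φ θ * U := by
  classical
  set Ψ : Tc → Matrix (Fin n) (Fin n) ℂ := fun θ => (Φ θ)ᴴ * Φ' θ with hΨ
  -- a.e. unitarity of Ψ
  have hΨunit : ∀ᵐ θ ∂(volume : Measure Tc), Ψ θ ∈ Matrix.unitaryGroup (Fin n) ℂ := by
    filter_upwards [hunit, hunit'] with θ h1 h2
    have : Ψ θ = star (Φ θ) * Φ' θ := by rw [hΨ, Matrix.star_eq_conjTranspose]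
    rw [this]
    exact mul_mem (Unitary.star_mem h1) h2
  -- vanishing of negative Fourier coefficients of entries of Ψ
  have hneg : ∀ i j : Fin n, ∀ m : ℤ, m < 0 →
      fourierCoeff (fun θ => Ψ θ i j) m = 0 := fun i j m hm =>
    my_aux_cols Φ Φ' hmeas' hunit hunit' (heq ▸ subset_rfl) i j m hm
  -- vanishing of positive Fourier coefficients of entries of Ψ
  have hpos : ∀ i j : Fin n, ∀ m : ℤ, 0 < m →
      fourierCoeff (fun θ => Ψ θ i j) m = 0 := by
    intro i j m hm
    have hneg' := my_aux_cols Φ' Φ hmeas hunit' hunit (heq ▸ subset_rfl) j i (-m) (by omega)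
    have hconjfun : (fun θ => (starRingEnd ℂ) (Ψ θ i j)) = fun θ => ((Φ' θ)ᴴ * Φ θ) j i := by
      funext θ
      show (starRingEnd ℂ) (((Φ θ)ᴴ * Φ' θ) i j) = ((Φ' θ)ᴴ * Φ θ) j i
      rw [show (Φ' θ)ᴴ * Φ θ = ((Φ θ)ᴴ * Φ' θ)ᴴ by
        rw [Matrix.conjTranspose_mul, Matrix.conjTranspose_conjTranspose],
        Matrix.conjTranspose_apply]
      rfl
    have h1 := my_fourierCoeff_conj (fun θ => Ψ θ i j) (-m)
    rw [neg_neg, hconjfun, hneg'] at h1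
    exact (starRingEnd ℂ).injective (by rw [← h1, map_zero])
  -- each entry of Ψ is a.e. constant
  have hmeasΨ : ∀ i j : Fin n, Measurable fun θ => Ψ θ i j := by
    intro i j
    have : (fun θ => Ψ θ i j) = fun θ => ∑ k, (starRingEnd ℂ) (Φ θ k i) * Φ' θ k j := by
      funext θ
      show ((Φ θ)ᴴ * Φ' θ) i j = _
      rw [Matrix.mul_apply]
      refine Finset.sum_congr rfl fun k _ => ?_
      rw [Matrix.conjTranspose_apply, RCLike.star_def]
    rw [this]
    exact Finset.measurable_sum _ fun k _ =>
      ((Complex.continuous_conj.measurable.comp (hmeas k i)).mul (hmeas' k j))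
  have hΨunitH : ∀ᵐ θ ∂(AddCircle.haarAddCircle : Measure Tc),
      Ψ θ ∈ Matrix.unitaryGroup (Fin n) ℂ := my_ae_eq ▸ hΨunit
  set C : Matrix (Fin n) (Fin n) ℂ :=
    Matrix.of fun i j => fourierCoeff (fun θ => Ψ θ i j) 0 with hC
  have hconst : ∀ᵐ θ ∂(AddCircle.haarAddCircle : Measure Tc), Ψ θ = C := by
    have hentry : ∀ i j : Fin n, ∀ᵐ θ ∂(AddCircle.haarAddCircle : Measure Tc),
        Ψ θ i j = C i j := by
      intro i j
      have hb : ∀ᵐ θ ∂(AddCircle.haarAddCircle : Measure Tc), ‖Ψ θ i j‖ ≤ 1 := by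
        filter_upwards [hΨunitH] with θ hθ
        exact my_unitary_entry_le hθ i j
      have hmem : MemLp (fun θ => Ψ θ i j) 2 (AddCircle.haarAddCircle : Measure Tc) :=
        MemLp.of_bound (hmeasΨ i j).aestronglyMeasurable 1 hb
      have := my_const_of_fourierCoeff (fun θ => Ψ θ i j) hmem (by
        intro m hm
        rcases lt_or_gt_of_ne hm with h | h
        · exact hneg i j m h
        · exact hpos i j m h)
      exact this
    have hall := (ae_all_iff.mpr fun i => ae_all_iff.mpr fun j => hentry i j)
    filter_upwards [hall] with θ hθ
    exact Matrix.ext fun i j => hθ i j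
  -- find a point where Ψ is both constant and unitary
  have hne : (ae (AddCircle.haarAddCircle : Measure Tc)).NeBot :=
    ae_neBot.mpr (IsProbabilityMeasure.ne_zero _)
  obtain ⟨θ₀, hθ₀C, hθ₀U⟩ := (hconst.and hΨunitH).exists
  have hCunit : C ∈ Matrix.unitaryGroup (Fin n) ℂ := hθ₀C ▸ hθ₀U
  refine ⟨C, hCunit, ?_⟩
  have hconstV : ∀ᵐ θ ∂(volume : Measure Tc), Ψ θ = C := my_ae_eq.symm ▸ hconst
  filter_upwards [hunit, hconstV] with θ h1 h2
  have h3 : Φ θ * (Φ θ)ᴴ = 1 := by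
    rw [← Matrix.star_eq_conjTranspose]
    exact Matrix.mem_unitaryGroup_iff.mp h1
  calc Φ' θ = (Φ θ * (Φ θ)ᴴ) * Φ' θ := by rw [h3, one_mul]
    _ = Φ θ * ((Φ θ)ᴴ * Φ' θ) := by rw [mul_assoc]
    _ = Φ θ * C := congrArg (fun M => Φ θ * M) h2

end
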